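/- A conditional lower prevision lp on C ⊆ C(X) is coherent if and only if it is real-valued and, for all n ≥ 0, all λ₀,…,λ_n ≥ 0 and all (f₀,B₀),…,(f_n,B_n) ∈ C, writing B := B₀ ∪ … ∪ B_n, one has sup_{x ∈ B} ( ∑_{i=1}^n λ_i·1_{B_i}(x)·(f_i(x) − lp(f_i|B_i)) − λ₀·1_{B₀}(x)·(f₀(x) − lp(f₀|B₀)) ) ≥ 0. -/

import Mathlib

open scoped BigOperators

namespace IPaper

variable {X : Type*}

/-- A gamble on `X`: a bounded real-valued function. -/
def IsGamble (f : X → ℝ) : Prop := ∃ M : ℝ, ∀ x, |f x| ≤ M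

/-- The indicator gamble of an event. -/
noncomputable def ind (B : Set X) : X → ℝ := Set.indicator B 1

/-- The set `G_{>0}(X)` of nonnegative nonzero gambles. -/
def Gpos (X : Type*) : Set (X → ℝ) := {f | IsGamble f ∧ 0 ≤ f ∧ f ≠ 0}

/-- A coherent set of desirable gambles. -/
structure CoherentSDG (D : Set (X → ℝ)) : Prop where
  subset_gambles : ∀ f ∈ D, IsGamble f
  d1 : ∀ f : X → ℝ, IsGamble f → 0 ≤ f → f ≠ 0 → f ∈ D
  d2 : ∀ f ∈ D, ∀ l : ℝ, 0 < l → l • f ∈ D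
  d3 : ∀ f ∈ D, ∀ g ∈ D, f + g ∈ D
  d4 : ∀ f : X → ℝ, f ≤ 0 → f ∉ D

/-- `posi A`: positive linear hull of `A`. -/
def posi (A : Set (X → ℝ)) : Set (X → ℝ) :=
  {g | ∃ (n : ℕ) (l : Fin (n + 1) → ℝ) (h : Fin (n + 1) → X → ℝ),
    (∀ i, 0 < l i) ∧ (∀ i, h i ∈ A) ∧ g = ∑ i, l i • h i}

/-- `E(A) := posi (A ∪ G_{>0}(X))`. -/
def natExtSet (A : Set (X → ℝ)) : Set (X → ℝ) := posi (A ∪ Gpos X)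

/-- `C(X)`: all pairs of a gamble and a nonempty event. -/
def domC (X : Type*) : Set ((X → ℝ) × Set X) := {p | IsGamble p.1 ∧ p.2.Nonempty}

/-- The conditional lower prevision `lp_D` derived from a set of gambles `D`. -/
noncomputable def lpOf (D : Set (X → ℝ)) (f : X → ℝ) (B : Set X) : EReal :=
  sSup (Real.toEReal '' {m : ℝ | (fun x => (f x - m) * ind B x) ∈ D})

/-- Coherence (Williams) of a conditional lower prevision on a domain `C`. -/
def Coherent (C : Set ((X → ℝ) × Set X)) (lp : (X → ℝ) → Set X → EReal) : Prop :=
  ∃ D : Set (X → ℝ), CoherentSDG D ∧ ∀ p ∈ C, lp p.1 p.2 = lpOf D p.1 p.2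

/-- The set `A_lp`. -/
def Alp (C : Set ((X → ℝ) × Set X)) (lp : (X → ℝ) → Set X → EReal) : Set (X → ℝ) :=
  {g | ∃ p ∈ C, ∃ m : ℝ, (m : EReal) < lp p.1 p.2 ∧ g = fun x => (p.1 x - m) * ind p.2 x}

/-- `E(lp) := E(A_lp)`. -/
def ElpSet (C : Set ((X → ℝ) × Set X)) (lp : (X → ℝ) → Set X → EReal) : Set (X → ℝ) :=
  natExtSet (Alp C lp)

/-- The natural extension of `lp` to all of `C(X)`. -/
noncomputable def natExtLP (C : Set ((X → ℝ) × Set X)) (lp : (X → ℝ) → Set X → EReal)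
    (f : X → ℝ) (B : Set X) : EReal :=
  lpOf (ElpSet C lp) f B

/-- Simple `B`-measurable gamble. -/
def SimpleMeas (Bfam : Set (Set X)) (g : X → ℝ) : Prop :=
  ∃ (c0 : ℝ) (n : ℕ) (c : Fin n → ℝ) (Bs : Fin n → Set X),
    0 ≤ c0 ∧ (∀ i, 0 ≤ c i) ∧ (∀ i, Bs i ∈ Bfam) ∧
    g = fun x => c0 + ∑ i, c i * ind (Bs i) x

/-- `B`-measurable gamble: uniform limit of nonnegative simple `B`-measurable gambles. -/
def BMeas (Bfam : Set (Set X)) (g : X → ℝ) : Prop :=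
  ∃ gs : ℕ → X → ℝ, (∀ n, 0 ≤ gs n ∧ SimpleMeas Bfam (gs n)) ∧
    TendstoUniformly gs g Filter.atTop

/-- A conditional linear prevision on `C(X)`: a coherent self-conjugate conditional
lower prevision on the full domain. -/
def CondLinPrev (P : (X → ℝ) → Set X → EReal) : Prop :=
  Coherent (domC X) P ∧ ∀ p ∈ domC X, P p.1 p.2 = -P (-p.1) p.2

section Product

variable {X1 X2 : Type*}

/-- `A_{1→2}`. -/
def A12 (D2 : Set (X2 → ℝ)) (F1 : Set (Set X1)) : Set (X1 × X2 → ℝ) :=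
  {g | ∃ f2 ∈ D2, ∃ B1 ∈ F1 ∪ {Set.univ}, g = fun p => f2 p.2 * ind B1 p.1}

/-- `A_{2→1}`. -/
def A21 (D1 : Set (X1 → ℝ)) (F2 : Set (Set X2)) : Set (X1 × X2 → ℝ) :=
  {g | ∃ f1 ∈ D1, ∃ B2 ∈ F2 ∪ {Set.univ}, g = fun p => f1 p.1 * ind B2 p.2}

/-- `D1 ⊗ D2`, relative to the families of conditioning events `F1`, `F2`. -/
def indNatExt (D1 : Set (X1 → ℝ)) (D2 : Set (X2 → ℝ))
    (F1 : Set (Set X1)) (F2 : Set (Set X2)) : Set (X1 × X2 → ℝ) :=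
  natExtSet (A12 D2 F1 ∪ A21 D1 F2)

/-- `marg_1(D)`. -/
def marg1 (D : Set (X1 × X2 → ℝ)) : Set (X1 → ℝ) :=
  {f | IsGamble f ∧ (fun p : X1 × X2 => f p.1) ∈ D}

/-- `marg_2(D)`. -/
def marg2 (D : Set (X1 × X2 → ℝ)) : Set (X2 → ℝ) :=
  {f | IsGamble f ∧ (fun p : X1 × X2 => f p.2) ∈ D}

/-- `marg_1(D|B2)`. -/
def marg1c (D : Set (X1 × X2 → ℝ)) (B2 : Set X2) : Set (X1 → ℝ) :=
  {f | IsGamble f ∧ (fun p : X1 × X2 => f p.1 * ind B2 p.2) ∈ D}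

/-- `marg_2(D|B1)`. -/
def marg2c (D : Set (X1 × X2 → ℝ)) (B1 : Set X1) : Set (X2 → ℝ) :=
  {f | IsGamble f ∧ (fun p : X1 × X2 => f p.2 * ind B1 p.1) ∈ D}

/-- Epistemic independence of a set of desirable gambles on `X1 × X2`. -/
def EpIndSDG (F1 : Set (Set X1)) (F2 : Set (Set X2)) (D : Set (X1 × X2 → ℝ)) : Prop :=
  (∀ B2 ∈ F2, marg1c D B2 = marg1 D) ∧ (∀ B1 ∈ F1, marg2c D B1 = marg2 D)

/-- Independent product (of sets of desirable gambles). -/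
def IndProductSDG (F1 : Set (Set X1)) (F2 : Set (Set X2))
    (D1 : Set (X1 → ℝ)) (D2 : Set (X2 → ℝ)) (D : Set (X1 × X2 → ℝ)) : Prop :=
  CoherentSDG D ∧ EpIndSDG F1 F2 D ∧ marg1 D = D1 ∧ marg2 D = D2

/-- The independent natural extension `lp1 ⊗ lp2` on `C(X1 × X2)`. -/
noncomputable def lpProd (C1 : Set ((X1 → ℝ) × Set X1)) (lp1 : (X1 → ℝ) → Set X1 → EReal)
    (C2 : Set ((X2 → ℝ) × Set X2)) (lp2 : (X2 → ℝ) → Set X2 → EReal)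
    (F1 : Set (Set X1)) (F2 : Set (Set X2)) :
    (X1 × X2 → ℝ) → Set (X1 × X2) → EReal :=
  lpOf (indNatExt (ElpSet C1 lp1) (ElpSet C2 lp2) F1 F2)

/-- An independent domain `C ⊆ C(X1 × X2)`. -/
def IndepDomain (F1 : Set (Set X1)) (F2 : Set (Set X2))
    (C : Set ((X1 × X2 → ℝ) × Set (X1 × X2))) : Prop :=
  (∀ (f1 : X1 → ℝ) (B1 : Set X1), IsGamble f1 → B1.Nonempty → ∀ B2 ∈ F2,
    (((fun p : X1 × X2 => f1 p.1), B1 ×ˢ (Set.univ : Set X2)) ∈ C ↔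
      ((fun p : X1 × X2 => f1 p.1), B1 ×ˢ B2) ∈ C)) ∧
  (∀ (f2 : X2 → ℝ) (B2 : Set X2), IsGamble f2 → B2.Nonempty → ∀ B1 ∈ F1,
    (((fun p : X1 × X2 => f2 p.2), (Set.univ : Set X1) ×ˢ B2) ∈ C ↔
      ((fun p : X1 × X2 => f2 p.2), B1 ×ˢ B2) ∈ C))

/-- Epistemic independence of a conditional lower prevision on a domain `C`. -/
def EpIndLP (F1 : Set (Set X1)) (F2 : Set (Set X2))
    (C : Set ((X1 × X2 → ℝ) × Set (X1 × X2)))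
    (lp : (X1 × X2 → ℝ) → Set (X1 × X2) → EReal) : Prop :=
  (∀ (f1 : X1 → ℝ) (B1 : Set X1), IsGamble f1 → B1.Nonempty →
    ((fun p : X1 × X2 => f1 p.1), B1 ×ˢ (Set.univ : Set X2)) ∈ C → ∀ B2 ∈ F2,
    lp (fun p : X1 × X2 => f1 p.1) (B1 ×ˢ (Set.univ : Set X2)) =
      lp (fun p : X1 × X2 => f1 p.1) (B1 ×ˢ B2)) ∧
  (∀ (f2 : X2 → ℝ) (B2 : Set X2), IsGamble f2 → B2.Nonempty →
    ((fun p : X1 × X2 => f2 p.2), (Set.univ : Set X1) ×ˢ B2) ∈ C → ∀ B1 ∈ F1,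
    lp (fun p : X1 × X2 => f2 p.2) ((Set.univ : Set X1) ×ˢ B2) =
      lp (fun p : X1 × X2 => f2 p.2) (B1 ×ˢ B2))

/-- Independent product of two conditional lower previsions, on the joint domain `C`. -/
def IndProductLP (F1 : Set (Set X1)) (F2 : Set (Set X2))
    (C1 : Set ((X1 → ℝ) × Set X1)) (lp1 : (X1 → ℝ) → Set X1 → EReal)
    (C2 : Set ((X2 → ℝ) × Set X2)) (lp2 : (X2 → ℝ) → Set X2 → EReal)
    (C : Set ((X1 × X2 → ℝ) × Set (X1 × X2)))
    (lp : (X1 × X2 → ℝ) → Set (X1 × X2) → EReal) : Prop :=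
  Coherent C lp ∧ EpIndLP F1 F2 C lp ∧
  (∀ p ∈ C1, lp (fun q : X1 × X2 => p.1 q.1) (p.2 ×ˢ (Set.univ : Set X2)) = lp1 p.1 p.2) ∧
  (∀ p ∈ C2, lp (fun q : X1 × X2 => p.1 q.2) ((Set.univ : Set X1) ×ˢ p.2) = lp2 p.1 p.2)

end Product


section Helpers

variable {X : Type*}

lemma ind_of_mem {B : Set X} {x : X} (h : x ∈ B) : ind B x = 1 := by
  simp [ind, Set.indicator_of_mem h]

lemma ind_of_not_mem {B : Set X} {x : X} (h : x ∉ B) : ind B x = 0 := by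
  simp [ind, Set.indicator_of_notMem h]

lemma ind_nonneg (B : Set X) (x : X) : 0 ≤ ind B x := by
  by_cases h : x ∈ B
  · rw [ind_of_mem h]; norm_num
  · rw [ind_of_not_mem h]

lemma ind_le_one (B : Set X) (x : X) : ind B x ≤ 1 := by
  by_cases h : x ∈ B
  · rw [ind_of_mem h]
  · rw [ind_of_not_mem h]; norm_num

lemma isGamble_smul {f : X → ℝ} (c : ℝ) (hf : IsGamble f) : IsGamble (c • f) := by
  obtain ⟨M, hM⟩ := hf
  exact ⟨|c| * M, fun x => by
    simp only [Pi.smul_apply, smul_eq_mul, abs_mul]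
    exact mul_le_mul_of_nonneg_left (hM x) (abs_nonneg c)⟩

lemma isGamble_add {f g : X → ℝ} (hf : IsGamble f) (hg : IsGamble g) : IsGamble (f + g) := by
  obtain ⟨M, hM⟩ := hf; obtain ⟨N, hN⟩ := hg
  exact ⟨M + N, fun x => (abs_add_le _ _).trans (add_le_add (hM x) (hN x))⟩

lemma isGamble_neg {f : X → ℝ} (hf : IsGamble f) : IsGamble (-f) := by
  obtain ⟨M, hM⟩ := hf
  exact ⟨M, fun x => by simpa using hM x⟩

lemma isGamble_sum {n : ℕ} {g : Fin n → X → ℝ} (h : ∀ i, IsGamble (g i)) :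
    IsGamble (∑ i, g i) := by
  induction n with
  | zero => exact ⟨0, by simp⟩
  | succ k ih =>
      rw [Fin.sum_univ_castSucc]
      exact isGamble_add (ih fun i => h _) (h _)

lemma isGamble_indmul {f : X → ℝ} (hf : IsGamble f) (m : ℝ) (B : Set X) :
    IsGamble (fun x => (f x - m) * ind B x) := by
  obtain ⟨M, hM⟩ := hf
  refine ⟨M + |m|, fun x => ?_⟩
  rw [abs_mul]
  calc |f x - m| * |ind B x| ≤ (|f x| + |m|) * 1 := by
        apply mul_le_mul (abs_sub _ _) _ (abs_nonneg _) (by positivity)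
        rw [abs_of_nonneg (ind_nonneg B x)]; exact ind_le_one B x
    _ ≤ M + |m| := by rw [mul_one]; exact add_le_add (hM x) le_rfl

lemma exists_pos_of_nonneg_ne_zero {f : X → ℝ} (h0 : 0 ≤ f) (hne : f ≠ 0) : ∃ x, 0 < f x := by
  by_contra h
  push_neg at h
  exact hne (funext fun x => le_antisymm (h x) (h0 x))

lemma ecoe_sSup {S : Set ℝ} (hS1 : S.Nonempty) (hS2 : BddAbove S) :
    sSup (Real.toEReal '' S) = ((sSup S : ℝ) : EReal) := by
  apply le_antisymm
  · apply sSup_le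
    rintro y ⟨m, hm, rfl⟩
    exact_mod_cast le_csSup hS2 hm
  · rw [le_sSup_iff]
    rintro b hb
    obtain ⟨m0, hm0⟩ := id hS1
    have h0 : (m0 : EReal) ≤ b := hb ⟨m0, hm0, rfl⟩
    induction b with
    | bot => simp at h0
    | coe b' =>
        have : ∀ m ∈ S, m ≤ b' := fun m hm => by exact_mod_cast hb ⟨m, hm, rfl⟩
        exact_mod_cast csSup_le hS1 this
    | top => exact le_top

lemma list_map_sum_eq {α β : Type*} [AddCommMonoid β] (L : List α) (f : α → β) :
    (L.map f).sum = ∑ i : Fin L.length, f (L.get i) := by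
  conv_lhs => rw [← List.ofFn_get L]
  rw [List.map_ofFn, List.sum_ofFn]
  rfl

lemma posi_single {A : Set (X → ℝ)} {h : X → ℝ} (hh : h ∈ A) : h ∈ posi A :=
  ⟨0, fun _ => 1, fun _ => h, fun _ => one_pos, fun _ => hh, by simp⟩

lemma posi_smul {A : Set (X → ℝ)} {g : X → ℝ} (hg : g ∈ posi A) {c : ℝ} (hc : 0 < c) :
    c • g ∈ posi A := by
  obtain ⟨n, l, h, hl, hh, rfl⟩ := hg
  refine ⟨n, fun i => c * l i, h, fun i => mul_pos hc (hl i), hh, ?_⟩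
  rw [Finset.smul_sum]
  refine Finset.sum_congr rfl fun i _ => ?_
  dsimp only
  rw [smul_smul]

lemma posi_add {A : Set (X → ℝ)} {g g' : X → ℝ} (hg : g ∈ posi A) (hg' : g' ∈ posi A) :
    g + g' ∈ posi A := by
  obtain ⟨n, l, h, hl, hh, rfl⟩ := hg
  obtain ⟨n', l', h', hl', hh', rfl⟩ := hg'
  refine ⟨n + 1 + n', (Fin.append l l' : Fin ((n+1)+(n'+1)) → ℝ),
    (Fin.append h h' : Fin ((n+1)+(n'+1)) → X → ℝ), ?_, ?_, ?_⟩
  · intro i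
    refine Fin.addCases (m := n+1) (n := n'+1) (fun j => ?_) (fun j => ?_) i
    · rw [Fin.append_left]; exact hl j
    · rw [Fin.append_right]; exact hl' j
  · intro i
    refine Fin.addCases (m := n+1) (n := n'+1) (fun j => ?_) (fun j => ?_) i
    · rw [Fin.append_left]; exact hh j
    · rw [Fin.append_right]; exact hh' j
  · have hsplit := Fin.sum_univ_add (f := fun i : Fin ((n+1)+(n'+1)) =>
        Fin.append l l' i • Fin.append h h' i)
    have h1 : ∑ i : Fin (n+1), Fin.append l l' (Fin.castAdd (n'+1) i) •
        Fin.append h h' (Fin.castAdd (n'+1) i) = ∑ i : Fin (n+1), l i • h i :=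
      Finset.sum_congr rfl fun i _ => by rw [Fin.append_left, Fin.append_left]
    have h2 : ∑ i : Fin (n'+1), Fin.append l l' (Fin.natAdd (n+1) i) •
        Fin.append h h' (Fin.natAdd (n+1) i) = ∑ i : Fin (n'+1), l' i • h' i :=
      Finset.sum_congr rfl fun i _ => by rw [Fin.append_right, Fin.append_right]
    exact (hsplit.trans (by rw [h1, h2])).symm

lemma posi_to_list {A : Set (X → ℝ)} {g : X → ℝ} (hg : g ∈ posi A) :
    ∃ L : List (ℝ × (X → ℝ)), L ≠ [] ∧ (∀ p ∈ L, 0 < p.1 ∧ p.2 ∈ A) ∧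
      g = (L.map fun p => p.1 • p.2).sum := by
  obtain ⟨n, l, h, hl, hh, rfl⟩ := hg
  refine ⟨List.ofFn (fun i => (l i, h i)), ?_, ?_, ?_⟩
  · have hlen : (List.ofFn (fun i : Fin (n+1) => (l i, h i))).length = n + 1 :=
      List.length_ofFn
    intro hnil; rw [hnil] at hlen; simp at hlen
  · intro p hp
    rw [List.mem_ofFn] at hp
    obtain ⟨i, rfl⟩ := hp
    exact ⟨hl i, hh i⟩
  · rw [List.map_ofFn, List.sum_ofFn]
    rfl

lemma posi_isGamble {A : Set (X → ℝ)} (hA : ∀ h ∈ A, IsGamble h) {g : X → ℝ}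
    (hg : g ∈ posi A) : IsGamble g := by
  obtain ⟨n, l, h, hl, hh, rfl⟩ := hg
  clear hl
  induction n with
  | zero => simpa using isGamble_smul (l 0) (hA _ (hh 0))
  | succ k ih =>
      rw [Fin.sum_univ_castSucc]
      exact isGamble_add (ih (fun _ => l _) (fun _ => h _) (fun i => hh _))
        (isGamble_smul _ (hA _ (hh _)))

def Sset (D : Set (X → ℝ)) (f : X → ℝ) (B : Set X) : Set ℝ :=
  {m : ℝ | (fun x => (f x - m) * ind B x) ∈ D}

lemma lpOf_def (D : Set (X → ℝ)) (f : X → ℝ) (B : Set X) :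
    lpOf D f B = sSup (Real.toEReal '' Sset D f B) := rfl

lemma sset_bddAbove {D : Set (X → ℝ)} (hD : CoherentSDG D) {f : X → ℝ}
    (hf : IsGamble f) (B : Set X) : BddAbove (Sset D f B) := by
  obtain ⟨M, hM⟩ := hf
  refine ⟨M, fun m hm => ?_⟩
  by_contra hlt
  push_neg at hlt
  refine hD.d4 _ (fun x => ?_) hm
  have h1 := abs_le.1 (hM x)
  have h2 : f x - m ≤ 0 := by linarith [h1.2]
  have := ind_nonneg B x
  simpa using mul_nonpos_iff.2 (Or.inr ⟨h2, this⟩)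

lemma sset_nonempty {D : Set (X → ℝ)} (hD : CoherentSDG D) {f : X → ℝ} {B : Set X}
    (hf : IsGamble f) (hB : B.Nonempty) : (Sset D f B).Nonempty := by
  obtain ⟨M, hM⟩ := hf
  obtain ⟨x₀, hx₀⟩ := hB
  refine ⟨-M - 1, hD.d1 _ (isGamble_indmul ⟨M, hM⟩ _ B) (fun x => ?_) (fun hzero => ?_)⟩
  · have h1 := abs_le.1 (hM x)
    have h2 : 0 ≤ f x - (-M - 1) := by linarith [h1.1]
    simpa using mul_nonneg h2 (ind_nonneg B x)
  · have := congrFun hzero x₀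
    rw [ind_of_mem hx₀, mul_one] at this
    have h1 := abs_le.1 (hM x₀)
    simp only [Pi.zero_apply] at this
    linarith [h1.1]

lemma lpOf_real {D : Set (X → ℝ)} (hD : CoherentSDG D) {f : X → ℝ} {B : Set X}
    (hf : IsGamble f) (hB : B.Nonempty) :
    lpOf D f B = ((sSup (Sset D f B) : ℝ) : EReal) :=
  ecoe_sSup (sset_nonempty hD hf hB) (sset_bddAbove hD hf B)

lemma sum_mem_or_zero {D : Set (X → ℝ)} (hD : CoherentSDG D) {ι : Type*} (s : Finset ι)
    (c : ι → ℝ) (g : ι → X → ℝ) (hc : ∀ i ∈ s, 0 ≤ c i) (hg : ∀ i ∈ s, 0 < c i → g i ∈ D) :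
    (∑ i ∈ s, c i • g i) ∈ D ∨ (∑ i ∈ s, c i • g i) = 0 := by
  classical
  induction s using Finset.induction_on with
  | empty => right; simp
  | insert _ _ hx ih =>
      rename_i a s
      rw [Finset.sum_insert hx]
      have hrest := ih (fun i hi => hc i (Finset.mem_insert_of_mem hi))
        (fun i hi => hg i (Finset.mem_insert_of_mem hi))
      rcases (hc a (Finset.mem_insert_self a s)).lt_or_eq with hca | hca
      · have hhead : c a • g a ∈ D := hD.d2 _ (hg a (Finset.mem_insert_self a s) hca) _ hca
        rcases hrest with hin | hzero
        · exact Or.inl (hD.d3 _ hhead _ hin)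
        · rw [hzero, add_zero]; exact Or.inl hhead
      · rw [← hca, zero_smul, zero_add]; exact hrest

end Helpers

section MainLemmas

variable {X : Type*} {C : Set ((X → ℝ) × Set X)} {lp : (X → ℝ) → Set X → EReal}

/-- The Williams / Pelessoni–Vicig condition. -/
def Wcond (C : Set ((X → ℝ) × Set X)) (lp : (X → ℝ) → Set X → EReal) : Prop :=
  ∀ (n : ℕ) (l : Fin (n + 1) → ℝ) (q : Fin (n + 1) → (X → ℝ) × Set X),
    (∀ i, 0 ≤ l i) → (∀ i, q i ∈ C) →
    0 ≤ sSup {y : ℝ | ∃ x ∈ ⋃ i, (q i).2, y =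
      (∑ i : Fin n, l i.succ * ind (q i.succ).2 x *
        ((q i.succ).1 x - (lp (q i.succ).1 (q i.succ).2).toReal)) -
      l 0 * ind (q 0).2 x * ((q 0).1 x - (lp (q 0).1 (q 0).2).toReal)}

lemma decomp_aux :
    ∀ L0 : List (ℝ × (X → ℝ)), (∀ p ∈ L0, 0 < p.1 ∧ p.2 ∈ Alp C lp ∪ Gpos X) →
    ∃ (L : List (ℝ × ((X → ℝ) × Set X) × ℝ)) (P : X → ℝ),
      (∀ t ∈ L, 0 < t.1 ∧ t.2.1 ∈ C ∧ (t.2.2 : EReal) < lp t.2.1.1 t.2.1.2) ∧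
      (∀ x, 0 ≤ P x) ∧ ((L = [] ∧ L0 ≠ []) → ∃ x, 0 < P x) ∧
      ∀ x, (L0.map fun p => p.1 • p.2).sum x =
        (L.map fun t => t.1 * (t.2.1.1 x - t.2.2) * ind t.2.1.2 x).sum + P x := by
  intro L0
  induction L0 with
  | nil =>
      intro _
      exact ⟨[], fun _ => 0, by simp, fun x => le_refl 0, by simp, by simp⟩
  | cons p tl ih =>
      intro hmem
      obtain ⟨L, P, h1, h2, h3, h4⟩ := ih (fun q hq => hmem q (List.mem_cons_of_mem _ hq))
      have hp := hmem p List.mem_cons_self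
      rcases hp.2 with hAlp | hGpos
      · obtain ⟨qp, hqC, m, hmlt, hform⟩ := hAlp
        refine ⟨(p.1, qp, m) :: L, P, ?_, h2, ?_, ?_⟩
        · rintro t ht
          rcases List.mem_cons.1 ht with rfl | ht
          · exact ⟨hp.1, hqC, hmlt⟩
          · exact h1 t ht
        · rintro ⟨h, -⟩; exact absurd h (List.cons_ne_nil _ _)
        · intro x
          have hx4 := h4 x
          have hx : p.2 x = (qp.1 x - m) * ind qp.2 x := by rw [hform]
          simp only [List.map_cons, List.sum_cons, Pi.add_apply, Pi.smul_apply,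
            smul_eq_mul] at hx4 ⊢
          rw [hx, hx4]; ring
      · obtain ⟨hgam, hge, hne'⟩ := hGpos
        refine ⟨L, fun x => p.1 * p.2 x + P x, h1, ?_, ?_, ?_⟩
        · intro x
          exact add_nonneg (mul_nonneg hp.1.le (hge x)) (h2 x)
        · intro _
          obtain ⟨x0, hx0⟩ := exists_pos_of_nonneg_ne_zero hge hne'
          refine ⟨x0, ?_⟩
          show (0:ℝ) < p.1 * p.2 x0 + P x0
          nlinarith [h2 x0, hp.1, hx0]
        · intro x
          have hx4 := h4 x
          simp only [List.map_cons, List.sum_cons, Pi.add_apply, Pi.smul_apply,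
            smul_eq_mul] at hx4 ⊢
          rw [hx4]; ring

lemma decomp {g : X → ℝ} (hg : g ∈ ElpSet C lp) :
    ∃ (L : List (ℝ × ((X → ℝ) × Set X) × ℝ)) (P : X → ℝ),
      (∀ t ∈ L, 0 < t.1 ∧ t.2.1 ∈ C ∧ (t.2.2 : EReal) < lp t.2.1.1 t.2.1.2) ∧
      (∀ x, 0 ≤ P x) ∧ (L = [] → ∃ x, 0 < P x) ∧
      ∀ x, g x = (L.map fun t => t.1 * (t.2.1.1 x - t.2.2) * ind t.2.1.2 x).sum + P x := by
  obtain ⟨L0, hne, hmem, rfl⟩ := posi_to_list hg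
  obtain ⟨L, P, h1, h2, h3, h4⟩ := decomp_aux L0 hmem
  exact ⟨L, P, h1, h2, fun hL => h3 ⟨hL, hne⟩, h4⟩

lemma wcond_contra (hcond : Wcond C lp) (k : ℕ) (lam0 : ℝ) (p0 : (X → ℝ) × Set X)
    (lt : Fin k → ℝ) (qt : Fin k → (X → ℝ) × Set X)
    (h0 : 0 ≤ lam0) (hp0 : p0 ∈ C) (hlt : ∀ i, 0 ≤ lt i) (hqt : ∀ i, qt i ∈ C)
    (c : ℝ) (hc : 0 < c)
    (hW : ∀ x, x ∈ p0.2 ∪ ⋃ i, (qt i).2 →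
      (∑ i : Fin k, lt i * ind (qt i).2 x * ((qt i).1 x - (lp (qt i).1 (qt i).2).toReal)) -
        lam0 * ind p0.2 x * (p0.1 x - (lp p0.1 p0.2).toReal) ≤ -c)
    (hne : p0.2.Nonempty) : False := by
  have h := hcond k (Fin.cons lam0 lt) (Fin.cons p0 qt)
    (Fin.cases h0 hlt) (Fin.cases hp0 hqt)
  simp only [Fin.cons_succ, Fin.cons_zero] at h
  obtain ⟨x0, hx0⟩ := hne
  refine absurd h (not_le.2 (lt_of_le_of_lt (csSup_le ?_ ?_) (by linarith : (-c : ℝ) < 0)))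
  · refine ⟨_, x0, Set.mem_iUnion.2 ⟨0, ?_⟩, rfl⟩
    simpa using hx0
  · rintro y ⟨x, hx, rfl⟩
    refine hW x ?_
    rw [Set.mem_iUnion] at hx
    obtain ⟨i, hi⟩ := hx
    rcases Fin.eq_zero_or_eq_succ i with rfl | ⟨j, rfl⟩
    · exact Or.inl (by simpa using hi)
    · exact Or.inr (Set.mem_iUnion.2 ⟨j, by simpa using hi⟩)

lemma alp_gambles (hC : C ⊆ domC X) : ∀ h ∈ Alp C lp ∪ Gpos X, IsGamble h := by
  rintro h (⟨p, hp, m, hm, rfl⟩ | hg)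
  · exact isGamble_indmul (hC hp).1 m p.2
  · exact hg.1

lemma coherent_ElpSet (hC : C ⊆ domC X)
    (hreal : ∀ p ∈ C, ∃ r : ℝ, lp p.1 p.2 = (r : EReal))
    (hcond : Wcond C lp) : CoherentSDG (ElpSet C lp) := by
  constructor
  · exact fun f hf => posi_isGamble (alp_gambles hC) hf
  · exact fun f hf h0 hne => posi_single (Or.inr ⟨hf, h0, hne⟩)
  · exact fun f hf l hl => posi_smul hf hl
  · exact fun f hf g hg => posi_add hf hg
  · intro g hle hg
    obtain ⟨L, P, h1, h2, h3, h4⟩ := decomp hg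
    rcases eq_or_ne L [] with rfl | hLne
    · obtain ⟨x, hx⟩ := h3 rfl
      have hzx := h4 x
      simp only [List.map_nil, List.sum_nil, zero_add] at hzx
      have := hle x
      rw [hzx] at this
      exact absurd this (not_le.2 hx)
    · have hlen : 0 < L.length := List.length_pos_iff.2 hLne
      set lt : Fin L.length → ℝ := fun i => (L.get i).1 with hlt_def
      set qt : Fin L.length → (X → ℝ) × Set X := fun i => (L.get i).2.1 with hqt_def
      set mt : Fin L.length → ℝ := fun i => (L.get i).2.2 with hmt_def
      set rt : Fin L.length → ℝ := fun i => (lp (qt i).1 (qt i).2).toReal with hrt_def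
      have hget : ∀ i : Fin L.length, L.get i ∈ L := fun i => List.get_mem L i
      have hltpos : ∀ i, 0 < lt i := fun i => (h1 _ (hget i)).1
      have hqtC : ∀ i, qt i ∈ C := fun i => (h1 _ (hget i)).2.1
      have hmlt : ∀ i, mt i < rt i := by
        intro i
        obtain ⟨r, hr⟩ := hreal (qt i) (hqtC i)
        have := (h1 _ (hget i)).2.2
        rw [hrt_def]
        simp only
        rw [hr] at this ⊢
        simp only [EReal.toReal_coe]
        exact_mod_cast this
      have hFpos : ∀ i, 0 < lt i * (rt i - mt i) := fun i =>
        mul_pos (hltpos i) (by linarith [hmlt i])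
      have huniv : (Finset.univ : Finset (Fin L.length)).Nonempty :=
        ⟨⟨0, hlen⟩, Finset.mem_univ _⟩
      obtain ⟨i0, -, hi0⟩ := Finset.exists_min_image Finset.univ
        (fun i => lt i * (rt i - mt i)) huniv
      refine wcond_contra hcond L.length 0 (qt ⟨0, hlen⟩) lt qt le_rfl (hqtC ⟨0, hlen⟩)
        (fun i => (hltpos i).le) hqtC (lt i0 * (rt i0 - mt i0)) (hFpos i0) ?_
        (hC (hqtC ⟨0, hlen⟩)).2
      intro x hx
      obtain ⟨j, hj⟩ : ∃ j : Fin L.length, x ∈ (qt j).2 := by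
        rcases hx with hx | hx
        · exact ⟨⟨0, hlen⟩, hx⟩
        · exact Set.mem_iUnion.1 hx
      simp only [zero_mul, sub_zero]
      have hsum1 : (∑ i, lt i * ((qt i).1 x - mt i) * ind (qt i).2 x) = g x - P x := by
        have heq2 : (L.map fun t => t.1 * (t.2.1.1 x - t.2.2) * ind t.2.1.2 x).sum
            = ∑ i, lt i * ((qt i).1 x - mt i) * ind (qt i).2 x := by
          rw [list_map_sum_eq]
        have hx4 := h4 x
        rw [heq2] at hx4
        linarith [hx4]
      have hsum2 : lt j * (rt j - mt j) ≤ ∑ i, lt i * ind (qt i).2 x * (rt i - mt i) := by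
        have hterm : lt j * ind (qt j).2 x * (rt j - mt j) = lt j * (rt j - mt j) := by
          rw [ind_of_mem hj]; ring
        rw [← hterm]
        refine Finset.single_le_sum
          (f := fun i => lt i * ind (qt i).2 x * (rt i - mt i))
          (fun i _ => ?_) (Finset.mem_univ j)
        have hin := ind_nonneg (qt i).2 x
        exact mul_nonneg (mul_nonneg (hltpos i).le hin) (by linarith [hmlt i])
      have hexp : (∑ i, lt i * ind (qt i).2 x * ((qt i).1 x - rt i)) =
          (∑ i, lt i * ((qt i).1 x - mt i) * ind (qt i).2 x)
            - ∑ i, lt i * ind (qt i).2 x * (rt i - mt i) := by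
        rw [← Finset.sum_sub_distrib]
        exact Finset.sum_congr rfl fun i _ => by ring
      have hgx : g x ≤ 0 := hle x
      have hPx : 0 ≤ P x := h2 x
      have := hi0 j (Finset.mem_univ j)
      rw [hexp, hsum1]
      linarith

lemma le_r_of_mem (hC : C ⊆ domC X)
    (hreal : ∀ p ∈ C, ∃ r : ℝ, lp p.1 p.2 = (r : EReal))
    (hcond : Wcond C lp) {f : X → ℝ} {B : Set X} {r m : ℝ}
    (hfB : (f, B) ∈ C) (hr : lp f B = (r : EReal))
    (hm : (fun x => (f x - m) * ind B x) ∈ ElpSet C lp) : m ≤ r := by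
  by_contra hgt
  push_neg at hgt
  obtain ⟨L, P, h1, h2, h3, h4⟩ := decomp hm
  set lt : Fin L.length → ℝ := fun i => (L.get i).1 with hlt_def
  set qt : Fin L.length → (X → ℝ) × Set X := fun i => (L.get i).2.1 with hqt_def
  set mt : Fin L.length → ℝ := fun i => (L.get i).2.2 with hmt_def
  set rt : Fin L.length → ℝ := fun i => (lp (qt i).1 (qt i).2).toReal with hrt_def
  have hget : ∀ i : Fin L.length, L.get i ∈ L := fun i => List.get_mem L i
  have hltpos : ∀ i, 0 < lt i := fun i => (h1 _ (hget i)).1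
  have hqtC : ∀ i, qt i ∈ C := fun i => (h1 _ (hget i)).2.1
  have hmlt : ∀ i, mt i < rt i := by
    intro i
    obtain ⟨r', hr'⟩ := hreal (qt i) (hqtC i)
    have := (h1 _ (hget i)).2.2
    rw [hrt_def]
    simp only
    rw [hr'] at this ⊢
    simp only [EReal.toReal_coe]
    exact_mod_cast this
  classical
  have hsne : (insert (m - r)
      (Finset.image (fun i => lt i * (rt i - mt i)) Finset.univ)).Nonempty :=
    ⟨m - r, Finset.mem_insert_self _ _⟩
  obtain ⟨c, hcmem, hcle⟩ : ∃ c, c ∈ insert (m - r)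
      (Finset.image (fun i => lt i * (rt i - mt i)) Finset.univ) ∧
      ∀ y ∈ insert (m - r)
        (Finset.image (fun i => lt i * (rt i - mt i)) Finset.univ), c ≤ y :=
    ⟨_, Finset.min'_mem _ hsne, fun y hy => Finset.min'_le _ y hy⟩
  have hcpos : 0 < c := by
    rcases Finset.mem_insert.1 hcmem with h | h
    · rw [h]; linarith
    · obtain ⟨i, -, hFi⟩ := Finset.mem_image.1 h
      rw [← hFi]
      exact mul_pos (hltpos i) (by linarith [hmlt i])
  have hc1 : c ≤ m - r := hcle _ (Finset.mem_insert_self _ _)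
  have hc2 : ∀ j, c ≤ lt j * (rt j - mt j) := fun j => hcle _
    (Finset.mem_insert_of_mem (Finset.mem_image_of_mem _ (Finset.mem_univ j)))
  refine wcond_contra hcond L.length 1 (f, B) lt qt zero_le_one hfB
    (fun i => (hltpos i).le) hqtC c hcpos ?_ (hC hfB).2
  intro x hx
  have hrtop : (lp (f, B).1 (f, B).2).toReal = r := by
    dsimp only
    rw [hr]; simp
  rw [hrtop]
  dsimp only
  have hsum1 : (∑ i, lt i * ((qt i).1 x - mt i) * ind (qt i).2 x) =
      (f x - m) * ind B x - P x := by
    have heq2 : (L.map fun t => t.1 * (t.2.1.1 x - t.2.2) * ind t.2.1.2 x).sum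
        = ∑ i, lt i * ((qt i).1 x - mt i) * ind (qt i).2 x := by
      rw [list_map_sum_eq]
    have hx4 := h4 x
    rw [heq2] at hx4
    linarith [hx4]
  have hsum2nn : 0 ≤ ∑ i, lt i * ind (qt i).2 x * (rt i - mt i) := by
    refine Finset.sum_nonneg fun i _ => ?_
    have hin := ind_nonneg (qt i).2 x
    exact mul_nonneg (mul_nonneg (hltpos i).le hin) (by linarith [hmlt i])
  have hexp : (∑ i, lt i * ind (qt i).2 x * ((qt i).1 x - rt i)) =
      (∑ i, lt i * ((qt i).1 x - mt i) * ind (qt i).2 x)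
        - ∑ i, lt i * ind (qt i).2 x * (rt i - mt i) := by
    rw [← Finset.sum_sub_distrib]
    exact Finset.sum_congr rfl fun i _ => by ring
  have hPx : 0 ≤ P x := h2 x
  rw [hexp, hsum1]
  have hindB : (f x - m) * ind B x - 1 * ind B x * (f x - r) = -(m - r) * ind B x := by ring
  rcases hx with hxB | hxU
  · rw [ind_of_mem hxB] at hindB ⊢
    linarith [hsum2nn, hPx, hc1]
  · obtain ⟨j, hj⟩ := Set.mem_iUnion.1 hxU
    have hsum2 : lt j * (rt j - mt j) ≤ ∑ i, lt i * ind (qt i).2 x * (rt i - mt i) := by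
      have hterm : lt j * ind (qt j).2 x * (rt j - mt j) = lt j * (rt j - mt j) := by
        rw [ind_of_mem hj]; ring
      rw [← hterm]
      refine Finset.single_le_sum
        (f := fun i => lt i * ind (qt i).2 x * (rt i - mt i))
        (fun i _ => ?_) (Finset.mem_univ j)
      have hin := ind_nonneg (qt i).2 x
      exact mul_nonneg (mul_nonneg (hltpos i).le hin) (by linarith [hmlt i])
    have hiB := ind_nonneg B x
    have key : 0 ≤ (m - r) * ind B x := mul_nonneg (by linarith) hiB
    linarith [hc2 j, hsum2, hPx, key]

lemma lpOf_ElpSet (hC : C ⊆ domC X)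
    (hreal : ∀ p ∈ C, ∃ r : ℝ, lp p.1 p.2 = (r : EReal))
    (hcond : Wcond C lp) {f : X → ℝ} {B : Set X} {r : ℝ}
    (hfB : (f, B) ∈ C) (hr : lp f B = (r : EReal)) :
    lpOf (ElpSet C lp) f B = (r : EReal) := by
  have hDco := coherent_ElpSet hC hreal hcond
  have hfg : IsGamble f := (hC hfB).1
  have hBne : B.Nonempty := (hC hfB).2
  rw [lpOf_real hDco hfg hBne]
  norm_cast
  have hmem : ∀ m : ℝ, m < r → m ∈ Sset (ElpSet C lp) f B := by
    intro m hm
    refine posi_single (Or.inl ⟨(f, B), hfB, m, ?_, rfl⟩)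
    rw [hr]
    exact_mod_cast hm
  have hub : ∀ m ∈ Sset (ElpSet C lp) f B, m ≤ r :=
    fun m hm => le_r_of_mem hC hreal hcond hfB hr hm
  apply le_antisymm
  · exact csSup_le ⟨r - 1, hmem _ (by linarith)⟩ hub
  · by_contra hlt
    push_neg at hlt
    have h2 : (sSup (Sset (ElpSet C lp) f B) + r) / 2 ∈ Sset (ElpSet C lp) f B :=
      hmem _ (by linarith)
    have := le_csSup (sset_bddAbove hDco hfg B) h2
    linarith

end MainLemmas

section Forward

variable {X : Type*}

lemma forward {C : Set ((X → ℝ) × Set X)} {lp : (X → ℝ) → Set X → EReal}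
    (hC : C ⊆ domC X) (h : Coherent C lp) :
    (∀ p ∈ C, ∃ r : ℝ, lp p.1 p.2 = (r : EReal)) ∧ Wcond C lp := by
  obtain ⟨D, hD, heq⟩ := h
  have hreal : ∀ p ∈ C, lp p.1 p.2 = ((sSup (Sset D p.1 p.2) : ℝ) : EReal) := fun p hp => by
    rw [heq p hp]; exact lpOf_real hD (hC hp).1 (hC hp).2
  refine ⟨fun p hp => ⟨_, hreal p hp⟩, ?_⟩
  intro n l q hl hq
  classical
  set R : Fin (n + 1) → ℝ := fun i => sSup (Sset D (q i).1 (q i).2) with hR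
  have hto : ∀ i : Fin (n + 1), (lp (q i).1 (q i).2).toReal = R i := by
    intro i
    rw [hreal (q i) (hq i)]
    simp [hR]
  simp only [hto]
  set U := ⋃ i, (q i).2 with hU
  set W : X → ℝ := fun x => (∑ i : Fin n, l i.succ * ind (q i.succ).2 x *
      ((q i.succ).1 x - R i.succ)) - l 0 * ind (q 0).2 x * ((q 0).1 x - R 0) with hWdef
  show 0 ≤ sSup {y : ℝ | ∃ x ∈ U, y = W x}
  set T := {y : ℝ | ∃ x ∈ U, y = W x} with hTdef
  by_contra hneg
  push_neg at hneg
  -- bounds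
  choose M hM using fun i : Fin (n + 1) => (hC (hq i)).1
  have habs : ∀ (i : Fin (n + 1)) (x : X),
      |l i * ind (q i).2 x * ((q i).1 x - R i)| ≤ l i * (M i + |R i|) := by
    intro i x
    rw [abs_mul, abs_mul, abs_of_nonneg (hl i), abs_of_nonneg (ind_nonneg _ _)]
    have h1 : |(q i).1 x - R i| ≤ M i + |R i| :=
      (abs_sub _ _).trans (add_le_add (hM i x) le_rfl)
    have h2 := ind_le_one (q i).2 x
    have h3 := ind_nonneg (q i).2 x
    have h4 := abs_nonneg ((q i).1 x - R i)
    have h5 : ind (q i).2 x * |(q i).1 x - R i| ≤ M i + |R i| := by nlinarith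
    calc l i * ind (q i).2 x * |(q i).1 x - R i|
        = l i * (ind (q i).2 x * |(q i).1 x - R i|) := by ring
      _ ≤ l i * (M i + |R i|) := mul_le_mul_of_nonneg_left h5 (hl i)
  have hbdd : BddAbove T := by
    refine ⟨(∑ i : Fin n, l i.succ * (M i.succ + |R i.succ|)) + l 0 * (M 0 + |R 0|), ?_⟩
    rintro y ⟨x, hx, rfl⟩
    have hA : (∑ i : Fin n, l i.succ * ind (q i.succ).2 x * ((q i.succ).1 x - R i.succ))
        ≤ ∑ i : Fin n, l i.succ * (M i.succ + |R i.succ|) :=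
      Finset.sum_le_sum fun i _ => (le_abs_self _).trans (habs i.succ x)
    have hB : -(l 0 * ind (q 0).2 x * ((q 0).1 x - R 0)) ≤ l 0 * (M 0 + |R 0|) :=
      (neg_le_abs _).trans (habs 0 x)
    show W x ≤ _
    rw [hWdef]
    dsimp only
    linarith
  have hWle : ∀ x, x ∈ U → W x ≤ sSup T := fun x hx => le_csSup hbdd ⟨x, hx, rfl⟩
  obtain ⟨x₀, hx₀⟩ := (hC (hq 0)).2
  have hx₀U : x₀ ∈ U := Set.mem_iUnion.2 ⟨0, hx₀⟩
  -- epsilon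
  set Λ := ∑ i : Fin n, l i.succ with hΛ
  have hΛ0 : 0 ≤ Λ := Finset.sum_nonneg fun i _ => hl i.succ
  set δ := -sSup T with hδ
  have hδpos : 0 < δ := by rw [hδ]; linarith
  set ε := δ / (2 * (Λ + 1)) with hε
  have hεpos : 0 < ε := by rw [hε]; positivity
  have hεΛ : ε * Λ + ε = δ / 2 := by rw [hε]; field_simp
  have hεΛ2 : ε * Λ < δ / 2 := by linarith
  -- choose m i
  have hchoose : ∀ i : Fin n, ∃ mm ∈ Sset D (q i.succ).1 (q i.succ).2, R i.succ - ε < mm := by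
    intro i
    refine exists_lt_of_lt_csSup
      (sset_nonempty hD (hC (hq i.succ)).1 (hC (hq i.succ)).2) ?_
    have : R i.succ - ε < R i.succ := by linarith
    exact this
  choose m hmS hmgt using hchoose
  set h1f : X → ℝ :=
    fun x => ∑ i : Fin n, l i.succ * (((q i.succ).1 x - m i) * ind (q i.succ).2 x) with hh1f
  have hmem1 : h1f ∈ D ∨ h1f = 0 := by
    have hsum := sum_mem_or_zero hD Finset.univ (fun i : Fin n => l i.succ)
      (fun i => fun x => ((q i.succ).1 x - m i) * ind (q i.succ).2 x)
      (fun i _ => hl i.succ) (fun i _ _ => hmS i)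
    have hfun : (∑ i : Fin n, (fun i : Fin n => l i.succ) i •
        (fun i => fun x => ((q i.succ).1 x - m i) * ind (q i.succ).2 x) i) = h1f := by
      funext x
      rw [Finset.sum_apply]
      rfl
    rwa [hfun] at hsum
  have hnotU : ∀ x, x ∉ U → h1f x = 0 := by
    intro x hxU
    show (∑ i : Fin n, l i.succ * (((q i.succ).1 x - m i) * ind (q i.succ).2 x)) = 0
    refine Finset.sum_eq_zero fun i _ => ?_
    rw [ind_of_not_mem (fun hmem => hxU (Set.mem_iUnion.2 ⟨i.succ, hmem⟩)), mul_zero, mul_zero]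
  have hKB : ∀ x, x ∈ U →
      h1f x ≤ sSup T + ε * Λ + l 0 * ind (q 0).2 x * ((q 0).1 x - R 0) := by
    intro x hx
    have hsplit : h1f x =
        (∑ i : Fin n, l i.succ * ind (q i.succ).2 x * ((q i.succ).1 x - R i.succ)) +
          ∑ i : Fin n, l i.succ * ind (q i.succ).2 x * (R i.succ - m i) := by
      show (∑ i : Fin n, l i.succ * (((q i.succ).1 x - m i) * ind (q i.succ).2 x)) = _
      rw [← Finset.sum_add_distrib]
      exact Finset.sum_congr rfl fun i _ => by ring
    have h2 : (∑ i : Fin n, l i.succ * ind (q i.succ).2 x * (R i.succ - m i))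
        ≤ ∑ i : Fin n, l i.succ * ε := by
      refine Finset.sum_le_sum fun i _ => ?_
      have h3 := ind_le_one (q i.succ).2 x
      have h4 := ind_nonneg (q i.succ).2 x
      have h5 : R i.succ - m i ≤ ε := by linarith [hmgt i]
      nlinarith [mul_nonneg (hl i.succ) h4, mul_nonneg (hl i.succ) hεpos.le, hεpos, hl i.succ]
    have h6 : (∑ i : Fin n, l i.succ * ε) = Λ * ε := by
      rw [hΛ, Finset.sum_mul]
    have h7 := hWle x hx
    have h8 : (∑ i : Fin n, l i.succ * ind (q i.succ).2 x * ((q i.succ).1 x - R i.succ))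
        = W x + l 0 * ind (q 0).2 x * ((q 0).1 x - R 0) := by
      rw [hWdef]
      dsimp only
      ring
    rw [hsplit, h8]
    linarith [mul_comm Λ ε ▸ h6 ▸ h2]
  rcases (hl 0).eq_or_lt with hl0 | hl0
  · -- l 0 = 0
    have hle0 : ∀ x, h1f x ≤ 0 := by
      intro x
      by_cases hxU : x ∈ U
      · have hKB' := hKB x hxU
        rw [← hl0, zero_mul, zero_mul, add_zero] at hKB'
        have hsT : sSup T = -δ := by rw [hδ]; ring
        rw [hsT] at hKB'
        linarith
      · rw [hnotU x hxU]
    rcases hmem1 with hin | hzero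
    · exact hD.d4 h1f (fun x => hle0 x) hin
    · have h0x := congrFun hzero x₀
      have hKB' := hKB x₀ hx₀U
      rw [← hl0, zero_mul, zero_mul, add_zero] at hKB'
      have hsT : sSup T = -δ := by rw [hδ]; ring
      rw [hsT, h0x] at hKB'
      simp only [Pi.zero_apply] at hKB'
      linarith
  · -- 0 < l 0
    set m₀ := R 0 + (δ / 2 - ε * Λ) / l 0 with hm₀def
    have hm₀gt : R 0 < m₀ := by
      rw [hm₀def]
      have : 0 < (δ / 2 - ε * Λ) / l 0 := div_pos (by linarith) hl0
      linarith
    set k : X → ℝ := fun x => ((q 0).1 x - m₀) * ind (q 0).2 x with hkdef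
    have hl0k : ∀ x, l 0 * k x =
        l 0 * ((q 0).1 x - R 0) * ind (q 0).2 x - (δ / 2 - ε * Λ) * ind (q 0).2 x := by
      intro x
      show l 0 * (((q 0).1 x - m₀) * ind (q 0).2 x) = _
      rw [hm₀def]
      field_simp
      ring
    set p : X → ℝ := fun x => l 0 * k x - h1f x with hpdef
    have hsT : sSup T = -δ := by rw [hδ]; ring
    have hpU : ∀ x, x ∈ U → δ / 2 ≤ p x := by
      intro x hx
      have hKBx := hKB x hx
      rw [hsT] at hKBx
      show δ / 2 ≤ l 0 * k x - h1f x
      rw [hl0k x]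
      by_cases hxB : x ∈ (q 0).2
      · rw [ind_of_mem hxB] at hKBx ⊢
        linarith
      · rw [ind_of_not_mem hxB] at hKBx ⊢
        linarith
    have hpnotU : ∀ x, x ∉ U → p x = 0 := by
      intro x hxU
      show l 0 * k x - h1f x = 0
      rw [hnotU x hxU, hl0k x,
        ind_of_not_mem (fun hh => hxU (Set.mem_iUnion.2 ⟨0, hh⟩))]
      ring
    have hp0 : ∀ x, 0 ≤ p x := by
      intro x
      by_cases hxU : x ∈ U
      · exact le_trans (by linarith : (0:ℝ) ≤ δ / 2) (hpU x hxU)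
      · rw [hpnotU x hxU]
    have hpne : p ≠ 0 := by
      intro hz
      have := congrFun hz x₀
      simp only [Pi.zero_apply] at this
      have h := hpU x₀ hx₀U
      rw [this] at h
      linarith
    have hh1fg : IsGamble h1f := by
      have : h1f = ∑ i : Fin n,
          (l i.succ • fun x => ((q i.succ).1 x - m i) * ind (q i.succ).2 x) := by
        funext x
        rw [Finset.sum_apply]
        rfl
      rw [this]
      exact isGamble_sum fun i => isGamble_smul _ (isGamble_indmul (hC (hq i.succ)).1 _ _)
    have hkg : IsGamble k := isGamble_indmul (hC (hq 0)).1 m₀ (q 0).2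
    have hpg : IsGamble p := by
      have : p = l 0 • k + (-h1f) := funext fun x => by
        show l 0 * k x - h1f x = l 0 * k x + (-(h1f x))
        ring
      rw [this]
      exact isGamble_add (isGamble_smul _ hkg) (isGamble_neg hh1fg)
    have hpD : p ∈ D := hD.d1 p hpg (fun x => hp0 x) hpne
    have hl0kD : l 0 • k ∈ D := by
      have hkey : l 0 • k = h1f + p := funext fun x => by
        show l 0 * k x = h1f x + (l 0 * k x - h1f x)
        ring
      rw [hkey]
      rcases hmem1 with hin | hzero
      · exact hD.d3 _ hin _ hpD
      · rw [hzero, zero_add]; exact hpD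
    have hkD : k ∈ D := by
      have h2 := hD.d2 _ hl0kD (l 0)⁻¹ (inv_pos.2 hl0)
      rwa [smul_smul, inv_mul_cancel₀ (ne_of_gt hl0), one_smul] at h2
    have hm₀S : m₀ ∈ Sset D (q 0).1 (q 0).2 := hkD
    have hle : m₀ ≤ R 0 := le_csSup (sset_bddAbove hD (hC (hq 0)).1 _) hm₀S
    linarith

end Forward

/-- Proposition 3: coherence is equivalent to the Pelessoni–Vicig
(Williams) condition. -/
theorem stmt2 {X : Type*} [Nonempty X] (C : Set ((X → ℝ) × Set X)) (hC : C ⊆ domC X)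
    (lp : (X → ℝ) → Set X → EReal) :
    Coherent C lp ↔
      ((∀ p ∈ C, ∃ r : ℝ, lp p.1 p.2 = (r : EReal)) ∧
        ∀ (n : ℕ) (l : Fin (n + 1) → ℝ) (q : Fin (n + 1) → (X → ℝ) × Set X),
          (∀ i, 0 ≤ l i) → (∀ i, q i ∈ C) →
          0 ≤ sSup {y : ℝ | ∃ x ∈ ⋃ i, (q i).2, y =
            (∑ i : Fin n, l i.succ * ind (q i.succ).2 x *
              ((q i.succ).1 x - (lp (q i.succ).1 (q i.succ).2).toReal)) -
            l 0 * ind (q 0).2 x * ((q 0).1 x - (lp (q 0).1 (q 0).2).toReal)}) := by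
  constructor
  · intro h
    obtain ⟨h1, h2⟩ := forward hC h
    exact ⟨h1, h2⟩
  · rintro ⟨hreal, hcond⟩
    have hcond' : Wcond C lp := hcond
    refine ⟨ElpSet C lp, coherent_ElpSet hC hreal hcond', ?_⟩
    intro p hp
    obtain ⟨r, hr⟩ := hreal p hp
    rw [hr, lpOf_ElpSet hC hreal hcond' (show (p.1, p.2) ∈ C from hp) hr]

end IPaper
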